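/- Let Ω₁,…,Ω_N ⊆ ℝ³ be pairwise disjoint bounded open convex sets. Then the set of triple points T = ⋃_{i<j<k} ∂Ω_i ∩ ∂Ω_j ∩ ∂Ω_k is a finite union of closed convex sets each of affine dimension at most 1 (i.e., a finite union of closed segments and points). -/
import Mathlib

open Module
set_option maxHeartbeats 800000

private lemma finrank_ker_two' (f : EuclideanSpace ℝ (Fin 3) →L[ℝ] ℝ) (hf : f ≠ 0) :
    finrank ℝ (LinearMap.ker (f : EuclideanSpace ℝ (Fin 3) →ₗ[ℝ] ℝ)) = 2 := by
  have hrk := LinearMap.finrank_range_add_finrank_ker (f : EuclideanSpace ℝ (Fin 3) →ₗ[ℝ] ℝ)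
  have hv : ∃ v, f v ≠ 0 := by
    by_contra hcon
    push_neg at hcon
    exact hf (by ext x; simp [hcon x])
  obtain ⟨v, hv⟩ := hv
  have hsurj : Function.Surjective (f : EuclideanSpace ℝ (Fin 3) →ₗ[ℝ] ℝ) := by
    intro y
    exact ⟨(y / f v) • v, by simp [div_mul_cancel₀, hv]⟩
  rw [LinearMap.range_eq_top.2 hsurj] at hrk
  simp only [finrank_top, finrank_self] at hrk
  have h3 : finrank ℝ (EuclideanSpace ℝ (Fin 3)) = 3 := by simp
  omega

private lemma mem_frontier_of_closures {X : Type*} [TopologicalSpace X] {A B : Set X}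
    (hAo : IsOpen A) (hd : Disjoint A B) {x : X}
    (hxA : x ∈ closure A) (hxB : x ∈ closure B) : x ∈ frontier A := by
  rw [hAo.frontier_eq]
  refine ⟨hxA, fun hxa => ?_⟩
  obtain ⟨y, hyA, hyB⟩ := mem_closure_iff.1 hxB A hAo hxa
  exact hd.le_bot ⟨hyA, hyB⟩

private lemma tripleInter_dim (A B C : Set (EuclideanSpace ℝ (Fin 3)))
    (hAo : IsOpen A) (hBo : IsOpen B) (hCo : IsOpen C)
    (hAc : Convex ℝ A) (hBc : Convex ℝ B) (hCc : Convex ℝ C)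
    (hAB : Disjoint A B) (hBC : Disjoint B C) (hAC : Disjoint A C) :
    finrank ℝ (affineSpan ℝ (closure A ∩ closure B ∩ closure C)).direction ≤ 1 := by
  set K := closure A ∩ closure B ∩ closure C with hKdef
  rcases K.eq_empty_or_nonempty with hKe | ⟨x₀, hx₀⟩
  · rw [hKe, direction_affineSpan, vectorSpan_empty]
    simp
  · have hxA : x₀ ∈ closure A := hx₀.1.1
    have hxB : x₀ ∈ closure B := hx₀.1.2
    have hxC : x₀ ∈ closure C := hx₀.2
    have hAne : A.Nonempty := closure_nonempty_iff.1 ⟨x₀, hxA⟩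
    have hBne : B.Nonempty := closure_nonempty_iff.1 ⟨x₀, hxB⟩
    have hCne : C.Nonempty := closure_nonempty_iff.1 ⟨x₀, hxC⟩
    obtain ⟨a, ha⟩ := hAne
    obtain ⟨b, hb⟩ := hBne
    obtain ⟨c, hc⟩ := hCne
    obtain ⟨f, s1, hfA, hfB⟩ := geometric_hahn_banach_open_open hAc hAo hBc hBo hAB
    obtain ⟨g, s2, hgB, hgC⟩ := geometric_hahn_banach_open_open hBc hBo hCc hCo hBC
    obtain ⟨h, s3, hhA, hhC⟩ := geometric_hahn_banach_open_open hAc hAo hCc hCo hAC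
    -- closure bounds
    have clle : ∀ (φ : EuclideanSpace ℝ (Fin 3) →L[ℝ] ℝ) (S : Set (EuclideanSpace ℝ (Fin 3)))
        (s : ℝ), (∀ y ∈ S, φ y < s) → ∀ x ∈ closure S, φ x ≤ s := by
      intro φ S s hS x hx
      have : closure S ⊆ φ ⁻¹' Set.Iic s :=
        closure_minimal (fun y hy => le_of_lt (hS y hy)) (isClosed_Iic.preimage φ.continuous)
      exact this hx
    have clge : ∀ (φ : EuclideanSpace ℝ (Fin 3) →L[ℝ] ℝ) (S : Set (EuclideanSpace ℝ (Fin 3)))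
        (s : ℝ), (∀ y ∈ S, s < φ y) → ∀ x ∈ closure S, s ≤ φ x := by
      intro φ S s hS x hx
      have : closure S ⊆ φ ⁻¹' Set.Ici s :=
        closure_minimal (fun y hy => le_of_lt (hS y hy)) (isClosed_Ici.preimage φ.continuous)
      exact this hx
    have hKf : ∀ x ∈ K, f x = s1 := fun x hx =>
      le_antisymm (clle f A s1 hfA x hx.1.1) (clge f B s1 hfB x hx.1.2)
    have hKg : ∀ x ∈ K, g x = s2 := fun x hx =>
      le_antisymm (clle g B s2 hgB x hx.1.2) (clge g C s2 hgC x hx.2)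
    have hKh : ∀ x ∈ K, h x = s3 := fun x hx =>
      le_antisymm (clle h A s3 hhA x hx.1.1) (clge h C s3 hhC x hx.2)
    rw [direction_affineSpan]
    by_contra hdim
    push_neg at hdim
    have hdim2 : 2 ≤ finrank ℝ (vectorSpan ℝ K) := hdim
    have hVle : ∀ (φ : EuclideanSpace ℝ (Fin 3) →L[ℝ] ℝ) (s : ℝ), (∀ x ∈ K, φ x = s) →
        vectorSpan ℝ K ≤ LinearMap.ker (φ : EuclideanSpace ℝ (Fin 3) →ₗ[ℝ] ℝ) := by
      intro φ s hφ
      rw [vectorSpan_def]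
      apply Submodule.span_le.2
      rintro v ⟨x, hx, y, hy, rfl⟩
      simp only [SetLike.mem_coe, LinearMap.mem_ker, vsub_eq_sub]
      simp [map_sub, hφ x hx, hφ y hy]
    have hf0 : f ≠ 0 := by
      intro hcon
      have := hfA a ha
      have := hfB b hb
      simp [hcon] at *
      linarith
    have hg0 : g ≠ 0 := by
      intro hcon
      have := hgB b hb
      have := hgC c hc
      simp [hcon] at *
      linarith
    have hh0 : h ≠ 0 := by
      intro hcon
      have := hhA a ha
      have := hhC c hc
      simp [hcon] at *
      linarith
    have hVf := hVle f s1 hKf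
    have hVg := hVle g s2 hKg
    have hVh := hVle h s3 hKh
    have hEf : vectorSpan ℝ K = LinearMap.ker (f : EuclideanSpace ℝ (Fin 3) →ₗ[ℝ] ℝ) :=
      Submodule.eq_of_le_of_finrank_le hVf (by rw [finrank_ker_two' f hf0]; omega)
    have hEg : vectorSpan ℝ K = LinearMap.ker (g : EuclideanSpace ℝ (Fin 3) →ₗ[ℝ] ℝ) :=
      Submodule.eq_of_le_of_finrank_le hVg (by rw [finrank_ker_two' g hg0]; omega)
    have hEh : vectorSpan ℝ K = LinearMap.ker (h : EuclideanSpace ℝ (Fin 3) →ₗ[ℝ] ℝ) :=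
      Submodule.eq_of_le_of_finrank_le hVh (by rw [finrank_ker_two' h hh0]; omega)
    -- get a vector with f w = 1
    have hv : ∃ v, f v ≠ 0 := by
      by_contra hcon
      push_neg at hcon
      exact hf0 (by ext x; simp [hcon x])
    obtain ⟨v₀, hv₀⟩ := hv
    set w := (f v₀)⁻¹ • v₀ with hw
    have hfw : f w = 1 := by simp [hw, inv_mul_cancel₀ hv₀]
    obtain ⟨t, ht⟩ : ∃ t : ℝ, t = g w := ⟨_, rfl⟩
    obtain ⟨u, hu⟩ : ∃ u : ℝ, u = h w := ⟨_, rfl⟩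
    have hgf : ∀ x, g x = t * f x := by
      intro x
      have hker : f (x - f x • w) = 0 := by simp [map_sub, map_smul, hfw]
      have : (x - f x • w) ∈ LinearMap.ker (g : EuclideanSpace ℝ (Fin 3) →ₗ[ℝ] ℝ) := by
        rw [← hEg, hEf]; exact hker
      have hg0' : g (x - f x • w) = 0 := this
      simp only [map_sub, map_smul, smul_eq_mul] at hg0'
      rw [ht]; linarith [hg0']
    have hhf : ∀ x, h x = u * f x := by
      intro x
      have hker : f (x - f x • w) = 0 := by simp [map_sub, map_smul, hfw]
      have : (x - f x • w) ∈ LinearMap.ker (h : EuclideanSpace ℝ (Fin 3) →ₗ[ℝ] ℝ) := by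
        rw [← hEh, hEf]; exact hker
      have hh0' : h (x - f x • w) = 0 := this
      simp only [map_sub, map_smul, smul_eq_mul] at hh0'
      rw [hu]; linarith [hh0']
    have hfx0 : f x₀ = s1 := hKf x₀ hx₀
    have hgx0 : g x₀ = s2 := hKg x₀ hx₀
    have hhx0 : h x₀ = s3 := hKh x₀ hx₀
    have hs2 : s2 = t * s1 := by rw [← hfx0, ← hgx0, hgf x₀]
    have hs3 : s3 = u * s1 := by rw [← hfx0, ← hhx0, hhf x₀]
    have hfa : f a < s1 := hfA a ha
    have hfb : s1 < f b := hfB b hb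
    have hgb : t * f b < t * s1 := by have := hgB b hb; rw [hgf b] at this; linarith
    have hgc : t * s1 < t * f c := by have := hgC c hc; rw [hgf c] at this; linarith
    have hha : u * f a < u * s1 := by have := hhA a ha; rw [hhf a] at this; linarith
    have hhc : u * s1 < u * f c := by have := hhC c hc; rw [hhf c] at this; linarith
    rcases lt_trichotomy t 0 with htn | hte | htp
    · have hfc : f c < s1 := by nlinarith
      rcases lt_trichotomy u 0 with hun | hue | hup
      · nlinarith
      · rw [hue] at hha; linarith
      · nlinarith
    · rw [hte] at hgb; linarith
    · nlinarith

/-- For pairwise disjoint bounded open convex sets in ℝ³, the set of triple points is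
a finite union of closed convex sets of affine dimension at most 1 (segments and points). -/
theorem triple_points_segments_3D (N : ℕ)
    (G : Fin N → Set (EuclideanSpace ℝ (Fin 3)))
    (hopen : ∀ j, IsOpen (G j)) (hconv : ∀ j, Convex ℝ (G j))
    (hbdd : ∀ j, Bornology.IsBounded (G j))
    (hdisj : Pairwise (Function.onFun Disjoint G)) :
    ∃ (m : ℕ) (C : Fin m → Set (EuclideanSpace ℝ (Fin 3))),
      (∀ i, IsClosed (C i) ∧ Convex ℝ (C i) ∧
        Module.finrank ℝ (affineSpan ℝ (C i)).direction ≤ 1) ∧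
      {x | ∃ i j k : Fin N, i < j ∧ j < k ∧
        x ∈ frontier (G i) ∧ x ∈ frontier (G j) ∧ x ∈ frontier (G k)} = ⋃ i, C i := by
  classical
  set D : Fin N × (Fin N × Fin N) → Set (EuclideanSpace ℝ (Fin 3)) := fun p =>
    if p.1 < p.2.1 ∧ p.2.1 < p.2.2 then
      closure (G p.1) ∩ closure (G p.2.1) ∩ closure (G p.2.2) else ∅ with hD
  set e : Fin (N * (N * N)) ≃ Fin N × (Fin N × Fin N) :=
    finProdFinEquiv.symm.trans (Equiv.prodCongr (Equiv.refl (Fin N)) finProdFinEquiv.symm)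
      with he
  have hDprop : ∀ p : Fin N × (Fin N × Fin N), IsClosed (D p) ∧ Convex ℝ (D p) ∧
      Module.finrank ℝ (affineSpan ℝ (D p)).direction ≤ 1 := by
    rintro ⟨p1, p2, p3⟩
    by_cases hcond : p1 < p2 ∧ p2 < p3
    · have hDeq : D (p1, p2, p3) =
          closure (G p1) ∩ closure (G p2) ∩ closure (G p3) := by
        simp only [hD]
        rw [if_pos]
        exact hcond
      rw [hDeq]
      refine ⟨(isClosed_closure.inter isClosed_closure).inter isClosed_closure,
        (((hconv p1).closure.inter (hconv p2).closure).inter (hconv p3).closure), ?_⟩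
      exact tripleInter_dim _ _ _ (hopen p1) (hopen p2) (hopen p3)
        (hconv p1) (hconv p2) (hconv p3)
        (hdisj (ne_of_lt hcond.1)) (hdisj (ne_of_lt hcond.2))
        (hdisj (ne_of_lt (lt_trans hcond.1 hcond.2)))
    · have hDeq : D (p1, p2, p3) = ∅ := by
        simp only [hD]
        rw [if_neg]
        exact hcond
      rw [hDeq]
      refine ⟨isClosed_empty, convex_empty, ?_⟩
      rw [direction_affineSpan, vectorSpan_empty]
      simp
  refine ⟨N * (N * N), fun i => D (e i), fun i => hDprop (e i), ?_⟩
  · rw [Function.Surjective.iUnion_comp e.surjective D]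
    ext x
    simp only [Set.mem_setOf_eq, Set.mem_iUnion]
    constructor
    · rintro ⟨i, j, k, hij, hjk, hfi, hfj, hfk⟩
      refine ⟨(i, j, k), ?_⟩
      simp only [hD, hij, hjk, and_self, if_true]
      exact ⟨⟨frontier_subset_closure hfi, frontier_subset_closure hfj⟩,
        frontier_subset_closure hfk⟩
    · rintro ⟨⟨i, j, k⟩, hx⟩
      simp only [hD] at hx
      split_ifs at hx with hcond
      · obtain ⟨⟨hxi, hxj⟩, hxk⟩ := hx
        refine ⟨i, j, k, hcond.1, hcond.2, ?_, ?_, ?_⟩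
        · exact mem_frontier_of_closures (hopen i) (hdisj (ne_of_lt hcond.1)) hxi hxj
        · exact mem_frontier_of_closures (hopen j)
            ((hdisj (ne_of_lt hcond.1)).symm) hxj hxi
        · exact mem_frontier_of_closures (hopen k)
            ((hdisj (ne_of_lt (lt_trans hcond.1 hcond.2))).symm) hxk hxi
      · exact absurd hx (Set.notMem_empty x)
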